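/- Let k ≥ 2 and define the Gaussian sum S(q,r) = Σ_{x=1}^{q} e(r x^k / q) for q ∈ ℕ, r ∈ ℤ, and define T_a(q) = q^{-s} Σ_{r=1, (r,q)=1}^{q} S(q, a_1 r) ⋯ S(q, a_s r) for a ∈ (ℤ∖{0})^s. Then T_a is a multiplicative function of q: if (q_1, q_2) = 1 then T_a(q_1 q_2) = T_a(q_1) T_a(q_2). -/

import Mathlib

open Real
open scoped BigOperators

noncomputable def ee (z : ℝ) : ℂ := Complex.exp (2 * Real.pi * Complex.I * z)

/-- The Gaussian sum `S(q,r) = Σ_{x=1}^q e(r x^k / q)`. -/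
noncomputable def SS (k : ℕ) (q : ℕ) (r : ℤ) : ℂ :=
    ∑ x ∈ Finset.Icc 1 q, ee ((r : ℝ) * (x : ℝ) ^ k / q)

/-- `T_a(q) = q^{-s} Σ_{r=1, (r;q)=1}^q S(q,a_1 r) ⋯ S(q,a_s r)`. -/
noncomputable def TT (k s : ℕ) (a : Fin s → ℤ) (q : ℕ) : ℂ :=
    ((q : ℂ) ^ s)⁻¹ *
      ∑ r ∈ (Finset.Icc 1 q).filter (fun r => Nat.gcd r q = 1),
        ∏ j, SS k q (a j * r)

lemma ee_add (x y : ℝ) : ee (x + y) = ee x * ee y := by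
  simp only [ee, ← Complex.exp_add]
  congr 1
  push_cast
  ring

lemma ee_int (m : ℤ) : ee m = 1 := by
  have := Complex.exp_int_mul_two_pi_mul_I m
  simpa [ee, mul_comm, mul_assoc, mul_left_comm] using this

lemma ee_div_congr {q : ℕ} (hq : q ≠ 0) {m n : ℤ} (h : m ≡ n [ZMOD (q:ℤ)]) :
    ee ((m : ℝ) / q) = ee ((n : ℝ) / q) := by
  obtain ⟨t, ht⟩ := Int.modEq_iff_dvd.mp h
  have hm : m = n + (-t) * q := by linarith
  have hqR : (q:ℝ) ≠ 0 := Nat.cast_ne_zero.mpr hq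
  have : (m:ℝ)/q = (n:ℝ)/q + ((-t : ℤ) : ℝ) := by
    rw [hm]; push_cast; field_simp
  rw [this, ee_add, ee_int, mul_one]

lemma ee_div_mul (q₁ q₂ : ℕ) (h₁ : q₁ ≠ 0) (h₂ : q₂ ≠ 0) (A B : ℤ) :
    ee ((A:ℝ)/q₁) * ee ((B:ℝ)/q₂) = ee (((A * q₂ + B * q₁ : ℤ) : ℝ) / ((q₁ * q₂ : ℕ) : ℝ)) := by
  rw [← ee_add]; congr 1
  have hq₁ : (q₁:ℝ) ≠ 0 := Nat.cast_ne_zero.mpr h₁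
  have hq₂ : (q₂:ℝ) ≠ 0 := Nat.cast_ne_zero.mpr h₂
  push_cast
  field_simp


lemma sum_Icc_eq_sum_zmod (q : ℕ) [NeZero q] (f : ZMod q → ℂ) (p : ZMod q → Prop)
    [DecidablePred p] :
    ∑ r ∈ (Finset.Icc 1 q).filter (fun r : ℕ => p ((r : ℕ) : ZMod q)), f ((r : ℕ) : ZMod q)
      = ∑ z ∈ Finset.univ.filter p, f z := by
  have hq : q ≠ 0 := NeZero.ne q
  refine Finset.sum_nbij' (i := fun r : ℕ => (r : ZMod q))
    (j := fun z : ZMod q => if z.val = 0 then q else z.val) ?_ ?_ ?_ ?_ ?_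
  · intro r hr
    simp only [Finset.mem_filter] at hr ⊢
    exact ⟨Finset.mem_univ _, hr.2⟩
  · intro z hz
    simp only [Finset.mem_filter] at hz ⊢
    have hvlt : z.val < q := ZMod.val_lt z
    have hcast : ((if z.val = 0 then q else z.val : ℕ) : ZMod q) = z := by
      split_ifs with h
      · rw [ZMod.natCast_self]
        exact ((ZMod.val_eq_zero z).mp h).symm
      · exact ZMod.natCast_zmod_val z
    refine ⟨Finset.mem_Icc.mpr ⟨?_, ?_⟩, ?_⟩
    · split_ifs with h
      · exact Nat.one_le_iff_ne_zero.mpr hq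
      · exact Nat.one_le_iff_ne_zero.mpr h
    · split_ifs with h
      · exact le_rfl
      · exact hvlt.le
    · rw [hcast]; exact hz.2
  · intro r hr
    simp only [Finset.mem_filter, Finset.mem_Icc] at hr
    obtain ⟨⟨h1, h2⟩, _⟩ := hr
    rw [ZMod.val_natCast]
    rcases lt_or_eq_of_le h2 with h | h
    · rw [Nat.mod_eq_of_lt h]
      have : r ≠ 0 := Nat.one_le_iff_ne_zero.mp h1
      simp [this]
    · subst h
      simp
  · intro z hz
    split_ifs with h
    · rw [ZMod.natCast_self]
      exact ((ZMod.val_eq_zero z).mp h).symm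
    · exact ZMod.natCast_zmod_val z
  · intro r hr
    rfl


lemma SS_term (k q : ℕ) (r : ℤ) (x : ℕ) :
    ee ((r : ℝ) * (x : ℝ) ^ k / q) = ee (((r * (x:ℤ)^k : ℤ) : ℝ) / q) := by
  congr 1; push_cast; ring

lemma SS_congr {k q : ℕ} (hq : q ≠ 0) {r r' : ℤ} (h : r ≡ r' [ZMOD (q:ℤ)]) :
    SS k q r = SS k q r' := by
  unfold SS
  refine Finset.sum_congr rfl fun x _ => ?_
  rw [SS_term, SS_term, ee_div_congr hq (h.mul_right _)]

lemma val_int_congr {q : ℕ} [NeZero q] (x : ℕ) :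
    ((x : ZMod q).val : ℤ) ≡ (x:ℤ) [ZMOD (q:ℤ)] := by
  rw [ZMod.val_natCast]
  exact_mod_cast Int.natCast_modEq_iff.mpr (Nat.mod_modEq x q)

lemma SS_eq_zmod (k q : ℕ) [NeZero q] (r : ℤ) :
    SS k q r = ∑ z : ZMod q, ee (((r * (z.val : ℤ)^k : ℤ) : ℝ) / q) := by
  have hq : q ≠ 0 := NeZero.ne q
  unfold SS
  have h := sum_Icc_eq_sum_zmod q (fun z => ee (((r * (z.val : ℤ)^k : ℤ) : ℝ) / q))
      (fun _ => True)
  simp only [Finset.filter_true] at h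
  rw [← h]
  refine Finset.sum_congr rfl fun x hx => ?_
  rw [SS_term]
  exact ee_div_congr hq (Int.ModEq.mul_left r (((val_int_congr x).pow k).symm))

lemma SS_mul (K q₁ q₂ : ℕ) (h₁ : q₁ ≠ 0) (h₂ : q₂ ≠ 0) (hcop : Nat.Coprime q₁ q₂) (r : ℤ) :
    SS (K+1) (q₁ * q₂) r
      = SS (K+1) q₁ ((q₂:ℤ)^K * r) * SS (K+1) q₂ ((q₁:ℤ)^K * r) := by
  haveI : NeZero q₁ := ⟨h₁⟩
  haveI : NeZero q₂ := ⟨h₂⟩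
  haveI : NeZero (q₁*q₂) := ⟨mul_ne_zero h₁ h₂⟩
  set e := ZMod.chineseRemainder hcop with he
  set π₁ : ZMod (q₁*q₂) →+* ZMod q₁ := (RingHom.fst _ _).comp e.toRingHom with hπ₁
  set π₂ : ZMod (q₁*q₂) →+* ZMod q₂ := (RingHom.snd _ _).comp e.toRingHom with hπ₂
  have hval₁ : ∀ x : ZMod (q₁*q₂), ((x.val : ℕ) : ZMod q₁) = π₁ x := by
    intro x
    rw [← map_natCast π₁ x.val, ZMod.natCast_zmod_val]
  have hval₂ : ∀ x : ZMod (q₁*q₂), ((x.val : ℕ) : ZMod q₂) = π₂ x := by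
    intro x
    rw [← map_natCast π₂ x.val, ZMod.natCast_zmod_val]
  set c₂ : ZMod q₁ := ((q₂ : ZMod q₁))⁻¹ with hc₂def
  set c₁ : ZMod q₂ := ((q₁ : ZMod q₂))⁻¹ with hc₁def
  have hc₂ : (q₂ : ZMod q₁) * c₂ = 1 := ZMod.coe_mul_inv_eq_one q₂ hcop.symm
  have hc₁ : (q₁ : ZMod q₂) * c₁ = 1 := ZMod.coe_mul_inv_eq_one q₁ hcop
  set φ : ZMod (q₁*q₂) → ZMod q₁ × ZMod q₂ := fun x => (c₂ * π₁ x, c₁ * π₂ x) with hφ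
  have hinj : Function.Injective φ := by
    intro x y hxy
    rw [hφ] at hxy
    simp only [Prod.mk.injEq] at hxy
    have e1 : π₁ x = π₁ y := by
      have := congrArg (fun t => (q₂ : ZMod q₁) * t) hxy.1
      simpa [← mul_assoc, hc₂] using this
    have e2 : π₂ x = π₂ y := by
      have := congrArg (fun t => (q₁ : ZMod q₂) * t) hxy.2
      simpa [← mul_assoc, hc₁] using this
    have : e x = e y := Prod.ext e1 e2
    exact e.injective this
  have hbij : Function.Bijective φ := by
    rw [Fintype.bijective_iff_injective_and_card]
    exact ⟨hinj, by simp [ZMod.card]⟩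
  rw [SS_eq_zmod, SS_eq_zmod, SS_eq_zmod, Finset.sum_mul_sum]
  have key := Fintype.sum_bijective φ hbij
    (fun z : ZMod (q₁*q₂) => ee (((r * (z.val : ℤ)^(K+1) : ℤ) : ℝ) / ((q₁*q₂ : ℕ) : ℝ)))
    (fun p : ZMod q₁ × ZMod q₂ =>
      ee ((((q₂:ℤ)^K * r * (p.1.val : ℤ)^(K+1) : ℤ) : ℝ) / q₁)
        * ee ((((q₁:ℤ)^K * r * (p.2.val : ℤ)^(K+1) : ℤ) : ℝ) / q₂)) ?_
  · rw [key, Fintype.sum_prod_type]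
  intro x
  rw [ee_div_mul q₁ q₂ h₁ h₂]
  refine ee_div_congr (mul_ne_zero h₁ h₂) ?_
  have hmn : ((q₁:ℤ)).natAbs.Coprime ((q₂:ℤ)).natAbs := by simpa using hcop
  have hcast : ((q₁ * q₂ : ℕ) : ℤ) = (q₁:ℤ) * (q₂:ℤ) := by push_cast; ring
  rw [hcast]
  rw [← Int.modEq_and_modEq_iff_modEq_mul hmn]
  constructor
  · rw [← ZMod.intCast_eq_intCast_iff]
    push_cast
    rw [hval₁ x, ZMod.natCast_self]
    rw [show (((c₂ * π₁ x, c₁ * π₂ x) : ZMod q₁ × ZMod q₂).1.val : ZMod q₁)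
        = c₂ * π₁ x from ZMod.natCast_zmod_val _]
    have h1 : ((q₂:ZMod q₁) * c₂)^(K+1) = 1 := by rw [hc₂, one_pow]
    linear_combination (-(r : ZMod q₁) * (π₁ x)^(K+1)) * h1
  · rw [← ZMod.intCast_eq_intCast_iff]
    push_cast
    rw [hval₂ x, ZMod.natCast_self]
    rw [show (((c₂ * π₁ x, c₁ * π₂ x) : ZMod q₁ × ZMod q₂).2.val : ZMod q₂)
        = c₁ * π₂ x from ZMod.natCast_zmod_val _]
    have h1 : ((q₁:ZMod q₂) * c₁)^(K+1) = 1 := by rw [hc₁, one_pow]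
    linear_combination (-(r : ZMod q₂) * (π₂ x)^(K+1)) * h1


open Classical in
lemma TT_sum_conv (k s : ℕ) (a : Fin s → ℤ) (q : ℕ) [NeZero q] :
    (∑ r ∈ (Finset.Icc 1 q).filter (fun r => Nat.gcd r q = 1), ∏ j, SS k q (a j * r))
      = ∑ z ∈ Finset.univ.filter (fun z : ZMod q => IsUnit z),
          ∏ j, SS k q (a j * (z.val : ℤ)) := by
  have hq : q ≠ 0 := NeZero.ne q
  rw [show (Finset.Icc 1 q).filter (fun r => Nat.gcd r q = 1)
      = (Finset.Icc 1 q).filter (fun r : ℕ => IsUnit ((r : ℕ) : ZMod q)) from ?_]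
  · rw [← sum_Icc_eq_sum_zmod q (fun z => ∏ j, SS k q (a j * (z.val : ℤ))) (fun z => IsUnit z)]
    refine Finset.sum_congr rfl fun r hr => ?_
    refine Finset.prod_congr rfl fun j _ => ?_
    exact SS_congr hq (Int.ModEq.mul_left (a j) (val_int_congr r)).symm
  · refine (Finset.filter_congr fun r _ => ?_).symm
    rw [ZMod.isUnit_iff_coprime]

open Classical in
/-- `T_a` is multiplicative: `T_a(q₁ q₂) = T_a(q₁) T_a(q₂)` for coprime `q₁, q₂`. -/
theorem stmt_13 (k s : ℕ) (hk : 2 ≤ k) (a : Fin s → ℤ) (ha : ∀ j, a j ≠ 0)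
    (q₁ q₂ : ℕ) (hq₁ : 0 < q₁) (hq₂ : 0 < q₂) (hcop : Nat.Coprime q₁ q₂) :
    TT k s a (q₁ * q₂) = TT k s a q₁ * TT k s a q₂ := by
  haveI : NeZero q₁ := ⟨hq₁.ne'⟩
  haveI : NeZero q₂ := ⟨hq₂.ne'⟩
  haveI : NeZero (q₁ * q₂) := ⟨mul_ne_zero hq₁.ne' hq₂.ne'⟩
  have h₁ : q₁ ≠ 0 := hq₁.ne'
  have h₂ : q₂ ≠ 0 := hq₂.ne'
  obtain ⟨K, rfl⟩ : ∃ K, k = K + 1 := ⟨k - 1, (Nat.succ_pred_eq_of_pos (by omega)).symm⟩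
  -- CRT setup
  set e := ZMod.chineseRemainder hcop with he
  set π₁ : ZMod (q₁*q₂) →+* ZMod q₁ := (RingHom.fst _ _).comp e.toRingHom with hπ₁
  set π₂ : ZMod (q₁*q₂) →+* ZMod q₂ := (RingHom.snd _ _).comp e.toRingHom with hπ₂
  have hval₁ : ∀ x : ZMod (q₁*q₂), ((x.val : ℕ) : ZMod q₁) = π₁ x := fun x => by
    rw [← map_natCast π₁ x.val, ZMod.natCast_zmod_val]
  have hval₂ : ∀ x : ZMod (q₁*q₂), ((x.val : ℕ) : ZMod q₂) = π₂ x := fun x => by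
    rw [← map_natCast π₂ x.val, ZMod.natCast_zmod_val]
  set c₂ : ZMod q₁ := ((q₂ : ZMod q₁))⁻¹ with hc₂def
  set c₁ : ZMod q₂ := ((q₁ : ZMod q₂))⁻¹ with hc₁def
  have hc₂ : (q₂ : ZMod q₁) * c₂ = 1 := ZMod.coe_mul_inv_eq_one q₂ hcop.symm
  have hc₁ : (q₁ : ZMod q₂) * c₁ = 1 := ZMod.coe_mul_inv_eq_one q₁ hcop
  have huc₂ : IsUnit c₂ := IsUnit.of_mul_eq_one _ (by rw [mul_comm]; exact hc₂)
  have huc₁ : IsUnit c₁ := IsUnit.of_mul_eq_one _ (by rw [mul_comm]; exact hc₁)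
  have huq₂ : IsUnit ((q₂ : ZMod q₁)) := IsUnit.of_mul_eq_one _ hc₂
  have huq₁ : IsUnit ((q₁ : ZMod q₂)) := IsUnit.of_mul_eq_one _ hc₁
  -- rewrite all three TT-sums over ZMod unit classes
  unfold TT
  rw [TT_sum_conv, TT_sum_conv, TT_sum_conv]
  -- main reindexing identity
  have main :
      (∑ z ∈ Finset.univ.filter (fun z : ZMod (q₁*q₂) => IsUnit z),
          ∏ j, SS (K+1) (q₁*q₂) (a j * (z.val : ℤ)))
        = (∑ u ∈ Finset.univ.filter (fun u : ZMod q₁ => IsUnit u),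
            ∏ j, SS (K+1) q₁ (a j * (u.val : ℤ)))
          * (∑ v ∈ Finset.univ.filter (fun v : ZMod q₂ => IsUnit v),
            ∏ j, SS (K+1) q₂ (a j * (v.val : ℤ))) := by
    rw [Finset.sum_mul_sum, ← Finset.sum_product']
    refine Finset.sum_nbij'
      (i := fun z : ZMod (q₁*q₂) => ((q₂:ZMod q₁)^K * π₁ z, (q₁:ZMod q₂)^K * π₂ z))
      (j := fun p : ZMod q₁ × ZMod q₂ => e.symm (c₂^K * p.1, c₁^K * p.2))
      ?_ ?_ ?_ ?_ ?_
    · intro z hz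
      simp only [Finset.mem_filter, Finset.mem_univ, true_and] at hz
      simp only [Finset.mem_product, Finset.mem_filter, Finset.mem_univ, true_and]
      exact ⟨(huq₂.pow K).mul (hz.map π₁), (huq₁.pow K).mul (hz.map π₂)⟩
    · intro p hp
      simp only [Finset.mem_product, Finset.mem_filter, Finset.mem_univ, true_and] at hp
      simp only [Finset.mem_filter, Finset.mem_univ, true_and]
      have : IsUnit ((c₂^K * p.1, c₁^K * p.2) : ZMod q₁ × ZMod q₂) := by
        obtain ⟨u, hu⟩ := (huc₂.pow K).mul hp.1
        obtain ⟨v, hv⟩ := (huc₁.pow K).mul hp.2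
        exact IsUnit.of_mul_eq_one ((↑u⁻¹ : ZMod q₁), (↑v⁻¹ : ZMod q₂))
          (Prod.ext (by simp [← hu]) (by simp [← hv]))
      exact this.map e.symm.toRingHom
    · intro z hz
      dsimp only
      have e1 : c₂^K * ((q₂:ZMod q₁)^K * π₁ z) = π₁ z := by
        rw [← mul_assoc, ← mul_pow, mul_comm c₂, hc₂, one_pow, one_mul]
      have e2 : c₁^K * ((q₁:ZMod q₂)^K * π₂ z) = π₂ z := by
        rw [← mul_assoc, ← mul_pow, mul_comm c₁, hc₁, one_pow, one_mul]
      rw [e1, e2]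
      have : ((π₁ z, π₂ z) : ZMod q₁ × ZMod q₂) = e z := rfl
      rw [this, RingEquiv.symm_apply_apply]
    · intro p hp
      have h1 : π₁ (e.symm (c₂^K * p.1, c₁^K * p.2)) = c₂^K * p.1 := by
        show (e (e.symm (c₂^K * p.1, c₁^K * p.2))).1 = _
        rw [RingEquiv.apply_symm_apply]
      have h2 : π₂ (e.symm (c₂^K * p.1, c₁^K * p.2)) = c₁^K * p.2 := by
        show (e (e.symm (c₂^K * p.1, c₁^K * p.2))).2 = _
        rw [RingEquiv.apply_symm_apply]
      rw [h1, h2]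
      refine Prod.ext ?_ ?_
      · show (q₂:ZMod q₁)^K * (c₂^K * p.1) = p.1
        rw [← mul_assoc, ← mul_pow, hc₂, one_pow, one_mul]
      · show (q₁:ZMod q₂)^K * (c₁^K * p.2) = p.2
        rw [← mul_assoc, ← mul_pow, hc₁, one_pow, one_mul]
    · intro z hz
      dsimp only
      have hsplit : ∀ j : Fin s, SS (K+1) (q₁*q₂) (a j * (z.val : ℤ))
          = SS (K+1) q₁ (a j * ((((q₂:ZMod q₁)^K * π₁ z).val : ℕ) : ℤ))
            * SS (K+1) q₂ (a j * ((((q₁:ZMod q₂)^K * π₂ z).val : ℕ) : ℤ)) := by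
        intro j
        rw [SS_mul K q₁ q₂ h₁ h₂ hcop]
        congr 1
        · refine SS_congr h₁ ?_
          rw [← ZMod.intCast_eq_intCast_iff]
          push_cast
          rw [hval₁ z, ZMod.natCast_zmod_val]
          ring
        · refine SS_congr h₂ ?_
          rw [← ZMod.intCast_eq_intCast_iff]
          push_cast
          rw [hval₂ z, ZMod.natCast_zmod_val]
          ring
      rw [Finset.prod_congr rfl (fun j _ => hsplit j), Finset.prod_mul_distrib]
  rw [main]
  have hcast : ((q₁ * q₂ : ℕ) : ℂ) = (q₁ : ℂ) * (q₂ : ℂ) := by push_cast; ring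
  rw [hcast, mul_pow, mul_inv]
  ring
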